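/- Let π be a directed path from u to v such that every edge (a,b) on π satisfies g(a→b) > g'(a→b), where g and g' are two fractional orientations of the same weighted graph. Then g(a→b) > 0 for all edges of π (so π is a directed path in the orientation g), and g'(b→a) > 0 for all edges of π (so the reverse of π is a directed path in the orientation g'). Consequently, if both g and g' are locally fair, then g(u) ≤ g(v) and g'(v) ≤ g'(u). -/

import Mathlib

open Finset Real

noncomputable section

variable {V : Type*}

/-- The out-degree of `u` in a fractional orientation `o`. -/
def outdeg [Fintype V] (o : V → V → ℝ) (u : V) : ℝ := ∑ x : V, o u x

/-- `o` is a fractional orientation of the weighted graph `(G, w)`: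
nonnegative values on directed edge-halves, supported on edges, summing to the edge weight. -/
def IsOrientation [Fintype V] (G : SimpleGraph V) (w : V → V → ℝ) (o : V → V → ℝ) : Prop :=
  (∀ u v, 0 ≤ o u v) ∧ (∀ u v, ¬ G.Adj u v → o u v = 0) ∧
    (∀ u v, G.Adj u v → o u v + o v u = w u v)

/-- A fractional orientation is locally fair if positive weight on `u → v`
implies `g(u) ≤ g(v)`. -/
def LocallyFair [Fintype V] (o : V → V → ℝ) : Prop :=
  ∀ u v, 0 < o u v → outdeg o u ≤ outdeg o v

/-- A fractional orientation is `η`-fair if positive weight on `u → v`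
implies `g(u) ≤ (1+η)·g(v)`. -/
def EtaFair [Fintype V] (η : ℝ) (o : V → V → ℝ) : Prop :=
  ∀ u v, 0 < o u v → outdeg o u ≤ (1 + η) * outdeg o v

/-- Total weight of edges of `G` inside the vertex set `S`. -/
def edgeWeight [Fintype V] (G : SimpleGraph V) [DecidableRel G.Adj] (w : V → V → ℝ)
    (S : Finset V) : ℝ :=
  (∑ u ∈ S, ∑ v ∈ S, if G.Adj u v then w u v else 0) / 2

/-- Density of the subgraph induced on `S`. -/
def densityOn [Fintype V] (G : SimpleGraph V) [DecidableRel G.Adj] (w : V → V → ℝ)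
    (S : Finset V) : ℝ :=
  edgeWeight G w S / S.card

/-- along a path on which `g(a→b) > g'(a→b)` for every edge, the path is
directed in `g`, its reverse is directed in `g'`, and if both orientations are locally
fair then `g(u) ≤ g(v)` and `g'(v) ≤ g'(u)`. -/

private lemma chain_head_last {α : Type*} {f : α → ℝ} {u v : α} :
    ∀ (l : List α), l.Chain' (fun a b => f a ≤ f b) →
    l.head? = some u → l.getLast? = some v → f u ≤ f v
  | [], _, h, _ => by simp at h
  | [a], _, hu, hv => by
      simp at hu hv; subst hu; subst hv; exact le_refl _
  | a :: b :: t, h, hu, hv => by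
      unfold List.Chain' at h; rw [List.isChain_cons_cons] at h
      have hu' : a = u := by simpa using hu
      have hv' : (b :: t).getLast? = some v := by
        simpa [List.getLast?] using hv
      calc f u = f a := by rw [hu']
        _ ≤ f b := h.1
        _ ≤ f v := chain_head_last (b :: t) h.2 rfl hv'

theorem symmetric_difference_path [Fintype V] (G : SimpleGraph V) (w : V → V → ℝ)
    (hwpos : ∀ u v, G.Adj u v → 0 < w u v) (hwsymm : ∀ u v, w u v = w v u)
    (o o' : V → V → ℝ) (ho : IsOrientation G w o) (ho' : IsOrientation G w o')
    (u v : V) (l : List V)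
    (hchain : l.Chain' fun a b => o' a b < o a b)
    (hhead : l.head? = some u) (hlast : l.getLast? = some v) :
    (l.Chain' fun a b => 0 < o a b) ∧ (l.Chain' fun a b => 0 < o' b a) ∧
      (LocallyFair o → LocallyFair o' →
        outdeg o u ≤ outdeg o v ∧ outdeg o' v ≤ outdeg o' u) := by
  obtain ⟨hnn, hsupp, hsum⟩ := ho
  obtain ⟨hnn', hsupp', hsum'⟩ := ho'
  have key : ∀ a b : V, o' a b < o a b → 0 < o a b ∧ 0 < o' b a := by
    intro a b hab
    have h1 : 0 < o a b := lt_of_le_of_lt (hnn' a b) hab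
    have hadj : G.Adj a b := by
      by_contra hna
      rw [hsupp a b hna] at h1; exact lt_irrefl _ h1
    have h2 : 0 < o' b a := by
      have := hsum a b hadj
      have := hsum' a b hadj
      nlinarith [hnn b a]
    exact ⟨h1, h2⟩
  have c1 : l.Chain' fun a b => 0 < o a b :=
    hchain.imp fun a b h => (key a b h).1
  have c2 : l.Chain' fun a b => 0 < o' b a :=
    hchain.imp fun a b h => (key a b h).2
  refine ⟨c1, c2, fun hf hf' => ?_⟩
  constructor
  · exact chain_head_last l (c1.imp fun a b h => hf _ _ h) hhead hlast
  · have c3 : l.Chain' fun a b => outdeg o' b ≤ outdeg o' a :=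
      c2.imp fun a b h => hf' _ _ h
    have c4 : l.reverse.Chain' fun a b => outdeg o' a ≤ outdeg o' b := by
      unfold List.Chain'; rw [List.isChain_reverse]; exact c3.imp fun a b h => h
    exact chain_head_last l.reverse c4 (by simpa using hlast) (by simpa using hhead)
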